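/- arXiv:2302.06205 — 2 statements merged into one kernel-verified Lean document; each statement's English description precedes it below -/
import Mathlib

section
/- Multi-agent policy performance difference: for joint policies π̂ and π on a finite discounted MDP, J(π̂) − J(π) = (1/(1−γ)) E_{s ∼ d^{π̂}, a ∼ π̂(·|s)}[A^π(s, a)], where d^{π̂}(s) = (1−γ) ∑_{t≥0} γ^t Pr(s_t = s | π̂) is the normalized discounted state-visitation distribution and A^π is the advantage function of π. -/
open scoped BigOperators

namespace A2PO

/-- A finite discounted MDP with a fixed initial state distribution. -/
structure MDP (S A : Type) [Fintype S] [Fintype A] where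
  /-- transition kernel -/
  T : S → A → S → ℝ
  T_nonneg : ∀ s a s', 0 ≤ T s a s'
  T_sum : ∀ s a, ∑ s', T s a s' = 1
  /-- reward function -/
  r : S → A → ℝ
  /-- discount factor -/
  γ : ℝ
  γ_nonneg : 0 ≤ γ
  γ_lt_one : γ < 1
  /-- initial state distribution -/
  ρ : S → ℝ
  ρ_nonneg : ∀ s, 0 ≤ ρ s
  ρ_sum : ∑ s, ρ s = 1

variable {S A : Type} [Fintype S] [Fintype A] [DecidableEq S] [Nonempty S] [Nonempty A]

/-- A (joint) policy: a probability distribution over actions at each state. -/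
def IsPolicy (π : S → A → ℝ) : Prop :=
  (∀ s a, 0 ≤ π s a) ∧ ∀ s, ∑ a, π s a = 1

/-- One step of the state-distribution evolution under policy `π`. -/
noncomputable def stepDist (M : MDP S A) (π : S → A → ℝ) (p : S → ℝ) : S → ℝ :=
  fun s' => ∑ s, ∑ a, p s * π s a * M.T s a s'

/-- The state distribution at time `t` under policy `π`, `Pr(s_t = s | π)`. -/
noncomputable def stateDist (M : MDP S A) (π : S → A → ℝ) : ℕ → S → ℝ
  | 0 => M.ρ
  | t + 1 => stepDist M π (stateDist M π t)

/-- The state distribution at time `t` under `π`, starting from state `s0`. -/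
noncomputable def stateDistFrom (M : MDP S A) (π : S → A → ℝ) (s0 : S) : ℕ → S → ℝ
  | 0 => fun s => if s = s0 then 1 else 0
  | t + 1 => stepDist M π (stateDistFrom M π s0 t)

/-- Expected one-step reward of `π` under state distribution `p`. -/
noncomputable def expReward (M : MDP S A) (π : S → A → ℝ) (p : S → ℝ) : ℝ :=
  ∑ s, p s * ∑ a, π s a * M.r s a

/-- The value function `V^π(s)`. -/
noncomputable def V (M : MDP S A) (π : S → A → ℝ) (s0 : S) : ℝ :=
  ∑' t : ℕ, M.γ ^ t * expReward M π (stateDistFrom M π s0 t)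

/-- The advantage function `A^π(s,a)`. -/
noncomputable def Adv (M : MDP S A) (π : S → A → ℝ) (s : S) (a : A) : ℝ :=
  M.r s a + M.γ * (∑ s', M.T s a s' * V M π s') - V M π s

/-- The expected discounted return `J(π)`. -/
noncomputable def J (M : MDP S A) (π : S → A → ℝ) : ℝ :=
  ∑' t : ℕ, M.γ ^ t * expReward M π (stateDist M π t)

/-- The normalized discounted state-visitation distribution `d^π`. -/
noncomputable def visit (M : MDP S A) (π : S → A → ℝ) (s : S) : ℝ :=
  (1 - M.γ) * ∑' t : ℕ, M.γ ^ t * stateDist M π t s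

/-- Total variation distance between two distributions on a finite set. -/
noncomputable def tv (p q : A → ℝ) : ℝ := (1 / 2) * ∑ a, |p a - q a|

/-- Maximal (over states) total variation distance between two policies. -/
noncomputable def tvMax (p q : S → A → ℝ) : ℝ := ⨆ s : S, tv (p s) (q s)

/-! ### Auxiliary lemmas -/

set_option linter.unusedSectionVars false

lemma sum3_comm' {X Y Z : Type} [Fintype X] [Fintype Y] [Fintype Z] (f : X → Y → Z → ℝ) :
    ∑ x, ∑ y, ∑ z, f x y z = ∑ z, ∑ x, ∑ y, f x y z := by
  calc ∑ x, ∑ y, ∑ z, f x y z = ∑ x, ∑ z, ∑ y, f x y z :=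
        Finset.sum_congr rfl fun x _ => Finset.sum_comm
    _ = ∑ z, ∑ x, ∑ y, f x y z := Finset.sum_comm

section Aux

variable (M : MDP S A) {π : S → A → ℝ}

lemma summable_of_bound {u : ℕ → ℝ} {C : ℝ} (h : ∀ t, |u t| ≤ C * M.γ ^ t) :
    Summable u := by
  refine Summable.of_abs (Summable.of_nonneg_of_le (fun t => abs_nonneg _) h ?_)
  exact (summable_geometric_of_lt_one M.γ_nonneg M.γ_lt_one).mul_left C

lemma stepDist_nonneg (hπ : IsPolicy π) {p : S → ℝ} (hp : ∀ s, 0 ≤ p s) :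
    ∀ s', 0 ≤ stepDist M π p s' := by
  intro s'
  refine Finset.sum_nonneg fun s _ => Finset.sum_nonneg fun a _ => ?_
  exact mul_nonneg (mul_nonneg (hp s) (hπ.1 s a)) (M.T_nonneg s a s')

lemma sum_stepDist (hπ : IsPolicy π) (p : S → ℝ) :
    ∑ s', stepDist M π p s' = ∑ s, p s := by
  unfold stepDist
  rw [Finset.sum_comm]
  refine Finset.sum_congr rfl fun s _ => ?_
  rw [Finset.sum_comm]
  have h : ∀ a : A, ∑ s', p s * π s a * M.T s a s' = p s * π s a := by
    intro a
    rw [← Finset.mul_sum, M.T_sum, mul_one]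
  rw [Finset.sum_congr rfl fun a _ => h a, ← Finset.mul_sum, hπ.2, mul_one]

lemma stateDist_nonneg (hπ : IsPolicy π) : ∀ t s, 0 ≤ stateDist M π t s := by
  intro t
  induction t with
  | zero => exact M.ρ_nonneg
  | succ t ih => exact stepDist_nonneg M hπ ih

lemma sum_stateDist (hπ : IsPolicy π) : ∀ t, ∑ s, stateDist M π t s = 1 := by
  intro t
  induction t with
  | zero => exact M.ρ_sum
  | succ t ih => rw [stateDist, sum_stepDist M hπ, ih]

lemma stateDistFrom_nonneg (hπ : IsPolicy π) (s0 : S) :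
    ∀ t s, 0 ≤ stateDistFrom M π s0 t s := by
  intro t
  induction t with
  | zero => intro s; simp only [stateDistFrom]; split <;> norm_num
  | succ t ih => exact stepDist_nonneg M hπ ih

lemma sum_stateDistFrom (hπ : IsPolicy π) (s0 : S) :
    ∀ t, ∑ s, stateDistFrom M π s0 t s = 1 := by
  intro t
  induction t with
  | zero => simp [stateDistFrom]
  | succ t ih => rw [stateDistFrom, sum_stepDist M hπ, ih]

/-- Bound on a `p`-weighted average of a function, for `p` a distribution. -/
lemma abs_avg_le {p : S → ℝ} (hp0 : ∀ s, 0 ≤ p s) (hp1 : ∑ s, p s = 1)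
    {g : S → ℝ} {C : ℝ} (hg : ∀ s, |g s| ≤ C) : |∑ s, p s * g s| ≤ C := by
  calc |∑ s, p s * g s| ≤ ∑ s, |p s * g s| := Finset.abs_sum_le_sum_abs _ _
    _ ≤ ∑ s, p s * C := by
        refine Finset.sum_le_sum fun s _ => ?_
        rw [abs_mul, abs_of_nonneg (hp0 s)]
        exact mul_le_mul_of_nonneg_left (hg s) (hp0 s)
    _ = C := by rw [← Finset.sum_mul, hp1, one_mul]

lemma abs_expReward_le {p : S → ℝ} (hp0 : ∀ s, 0 ≤ p s) (hp1 : ∑ s, p s = 1) :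
    |expReward M π p|
      ≤ Finset.univ.sup' Finset.univ_nonempty (fun s => |∑ a, π s a * M.r s a|) :=
  abs_avg_le hp0 hp1 fun s =>
    Finset.le_sup' (fun s => |∑ a, π s a * M.r s a|) (Finset.mem_univ s)

lemma summable_expReward_from (hπ : IsPolicy π) (s0 : S) :
    Summable (fun t : ℕ => M.γ ^ t * expReward M π (stateDistFrom M π s0 t)) := by
  refine summable_of_bound M (C := Finset.univ.sup' Finset.univ_nonempty
    (fun s => |∑ a, π s a * M.r s a|)) fun t => ?_
  rw [abs_mul, abs_pow, abs_of_nonneg M.γ_nonneg, mul_comm]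
  exact mul_le_mul_of_nonneg_right
    (abs_expReward_le M (stateDistFrom_nonneg M hπ s0 t) (sum_stateDistFrom M hπ s0 t))
    (pow_nonneg M.γ_nonneg t)

lemma summable_expReward (hπ : IsPolicy π) :
    Summable (fun t : ℕ => M.γ ^ t * expReward M π (stateDist M π t)) := by
  refine summable_of_bound M (C := Finset.univ.sup' Finset.univ_nonempty
    (fun s => |∑ a, π s a * M.r s a|)) fun t => ?_
  rw [abs_mul, abs_pow, abs_of_nonneg M.γ_nonneg, mul_comm]
  exact mul_le_mul_of_nonneg_right
    (abs_expReward_le M (stateDist_nonneg M hπ t) (sum_stateDist M hπ t))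
    (pow_nonneg M.γ_nonneg t)

/-- `stepDist` is linear in the distribution argument. -/
lemma stepDist_linear (π : S → A → ℝ) (c : S → ℝ) (p : S → S → ℝ) (s' : S) :
    stepDist M π (fun s => ∑ s0, c s0 * p s0 s) s'
      = ∑ s0, c s0 * stepDist M π (p s0) s' := by
  unfold stepDist
  simp only [Finset.sum_mul]
  rw [sum3_comm' (f := fun s a s0 => c s0 * p s0 s * π s a * M.T s a s')]
  refine Finset.sum_congr rfl fun s0 _ => ?_
  simp only [Finset.mul_sum]
  exact Finset.sum_congr rfl fun s _ => Finset.sum_congr rfl fun a _ => by ring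

lemma expReward_linear (π : S → A → ℝ) (c : S → ℝ) (p : S → S → ℝ) :
    expReward M π (fun s => ∑ s0, c s0 * p s0 s)
      = ∑ s0, c s0 * expReward M π (p s0) := by
  unfold expReward
  simp only [Finset.sum_mul]
  rw [Finset.sum_comm]
  refine Finset.sum_congr rfl fun s0 _ => ?_
  rw [Finset.mul_sum]
  exact Finset.sum_congr rfl fun s _ => by ring

lemma stateDist_eq_sum (π : S → A → ℝ) :
    ∀ t s, stateDist M π t s = ∑ s0, M.ρ s0 * stateDistFrom M π s0 t s := by
  intro t
  induction t with
  | zero =>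
      intro s
      simp only [stateDist, stateDistFrom]
      rw [Finset.sum_eq_single s]
      · simp
      · intro s0 _ hne
        simp [Ne.symm hne]
      · simp
  | succ t ih =>
      intro s
      have h : stateDist M π t = fun s => ∑ s0, M.ρ s0 * stateDistFrom M π s0 t s :=
        funext fun s => ih s
      show stepDist M π (stateDist M π t) s = _
      rw [h, stepDist_linear]
      rfl

/-- `J` as the `ρ`-average of the value function. -/
lemma J_eq_sum_V (hπ : IsPolicy π) : J M π = ∑ s0, M.ρ s0 * V M π s0 := by
  unfold J V
  have h1 : ∀ t : ℕ, M.γ ^ t * expReward M π (stateDist M π t)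
      = ∑ s0, M.ρ s0 * (M.γ ^ t * expReward M π (stateDistFrom M π s0 t)) := by
    intro t
    have h : stateDist M π t = fun s => ∑ s0, M.ρ s0 * stateDistFrom M π s0 t s :=
      funext fun s => stateDist_eq_sum M π t s
    rw [h, expReward_linear, Finset.mul_sum]
    exact Finset.sum_congr rfl fun s0 _ => by ring
  rw [tsum_congr h1, Summable.tsum_finsetSum (fun s0 _ =>
    ((summable_expReward_from M hπ s0).mul_left (M.ρ s0)))]
  exact Finset.sum_congr rfl fun s0 _ => tsum_mul_left

/-- The key one-step identity. -/
lemma key_identity (π πh : S → A → ℝ) (hπh : IsPolicy πh) (p : S → ℝ) :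
    ∑ s, p s * ∑ a, πh s a * Adv M π s a
      = expReward M πh p + M.γ * (∑ s', stepDist M πh p s' * V M π s')
        - ∑ s, p s * V M π s := by
  have hs : ∀ s, p s * ∑ a, πh s a * Adv M π s a
      = p s * (∑ a, πh s a * M.r s a)
        + (∑ a, ∑ s', p s * πh s a * M.T s a s' * (M.γ * V M π s'))
        - p s * V M π s := by
    intro s
    have h1 : ∑ a, πh s a * Adv M π s a
        = (∑ a, πh s a * M.r s a)
          + (∑ a, ∑ s', πh s a * M.T s a s' * (M.γ * V M π s'))
          - V M π s := by
      unfold Adv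
      simp only [mul_sub, mul_add, Finset.sum_sub_distrib, Finset.sum_add_distrib]
      rw [← Finset.sum_mul, hπh.2 s, one_mul]
      congr 1
      congr 1
      refine Finset.sum_congr rfl fun a _ => ?_
      simp only [Finset.mul_sum]
      exact Finset.sum_congr rfl fun s' _ => by ring
    rw [h1, mul_sub, mul_add]
    congr 2
    simp only [Finset.mul_sum]
    exact Finset.sum_congr rfl fun a _ => Finset.sum_congr rfl fun s' _ => by ring
  rw [Finset.sum_congr rfl fun s _ => hs s, Finset.sum_sub_distrib,
    Finset.sum_add_distrib]
  congr 1
  congr 1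
  unfold stepDist
  rw [sum3_comm' (f := fun s a s' => p s * πh s a * M.T s a s' * (M.γ * V M π s'))]
  simp only [Finset.mul_sum, Finset.sum_mul]
  exact Finset.sum_congr rfl fun s' _ => Finset.sum_congr rfl fun s _ =>
    Finset.sum_congr rfl fun a _ => by ring

end Aux

/-- Multi-agent policy performance difference lemma. -/
theorem performance_difference (M : MDP S A) (π πh : S → A → ℝ)
    (hπ : IsPolicy π) (hπh : IsPolicy πh) :
    J M πh - J M π
      = (1 / (1 - M.γ)) * ∑ s, visit M πh s * ∑ a, πh s a * Adv M π s a := by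
  classical
  set g : S → ℝ := fun s => ∑ a, πh s a * Adv M π s a with hg
  set f : ℕ → ℝ := fun t => ∑ s, stateDist M πh t s * V M π s with hf
  set h : ℕ → ℝ := fun t => M.γ ^ t * f t with hh
  -- bound on V
  obtain ⟨CV, hCV⟩ : ∃ C, ∀ s, |V M π s| ≤ C :=
    ⟨Finset.univ.sup' Finset.univ_nonempty (fun s => |V M π s|),
      fun s => Finset.le_sup' (fun s => |V M π s|) (Finset.mem_univ s)⟩
  have hfb : ∀ t, |f t| ≤ CV := fun t => by
    simpa using abs_avg_le (stateDist_nonneg M hπh t) (sum_stateDist M hπh t) hCV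
  have hhsum : Summable h := by
    refine summable_of_bound M (C := CV) fun t => ?_
    rw [hh]
    simp only
    rw [abs_mul, abs_pow, abs_of_nonneg M.γ_nonneg, mul_comm]
    exact mul_le_mul_of_nonneg_right (hfb t) (pow_nonneg M.γ_nonneg t)
  have hhsum' : Summable (fun t => h (t + 1)) := (summable_nat_add_iff 1).mpr hhsum
  have hesum : Summable (fun t : ℕ => M.γ ^ t * expReward M πh (stateDist M πh t)) :=
    summable_expReward M hπh
  -- key identity at each time step
  have hkey : ∀ t : ℕ, ∑ s, stateDist M πh t s * g s
      = expReward M πh (stateDist M πh t) + M.γ * f (t + 1) - f t := by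
    intro t
    have := key_identity M π πh hπh (stateDist M πh t)
    simpa [hg, hf, stateDist] using this
  -- rewrite the RHS sum over states as a tsum over time
  have hsummand : ∀ s, visit M πh s * g s
      = (1 - M.γ) * ∑' t : ℕ, M.γ ^ t * stateDist M πh t s * g s := by
    intro s
    rw [visit, mul_assoc, ← tsum_mul_right]
  have hsum_s : ∀ s, Summable (fun t : ℕ => M.γ ^ t * stateDist M πh t s * g s) := by
    intro s
    refine summable_of_bound M (C := |g s|) fun t => ?_
    rw [abs_mul, abs_mul, abs_pow, abs_of_nonneg M.γ_nonneg,
      abs_of_nonneg (stateDist_nonneg M hπh t s)]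
    rw [mul_comm (|g s|) (M.γ ^ t)]
    refine mul_le_mul_of_nonneg_right ?_ (abs_nonneg _)
    calc M.γ ^ t * stateDist M πh t s ≤ M.γ ^ t * 1 := by
          refine mul_le_mul_of_nonneg_left ?_ (pow_nonneg M.γ_nonneg t)
          calc stateDist M πh t s
              ≤ ∑ s', stateDist M πh t s' :=
                Finset.single_le_sum (fun s' _ => stateDist_nonneg M hπh t s')
                  (Finset.mem_univ s)
            _ = 1 := sum_stateDist M hπh t
      _ = M.γ ^ t := mul_one _
  have hγne : (1 : ℝ) - M.γ ≠ 0 := by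
    have := M.γ_lt_one; intro hc; linarith
  have hRHS : (1 / (1 - M.γ)) * ∑ s, visit M πh s * g s
      = ∑' t : ℕ, M.γ ^ t * ∑ s, stateDist M πh t s * g s := by
    rw [Finset.sum_congr rfl fun s _ => hsummand s, ← Finset.mul_sum]
    rw [← Summable.tsum_finsetSum (fun s _ => hsum_s s)]
    rw [show (1 / (1 - M.γ)) * ((1 - M.γ) *
        ∑' t : ℕ, ∑ s, M.γ ^ t * stateDist M πh t s * g s)
      = ∑' t : ℕ, ∑ s, M.γ ^ t * stateDist M πh t s * g s from by
        rw [← mul_assoc, one_div, inv_mul_cancel₀ hγne, one_mul]]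
    refine tsum_congr fun t => ?_
    rw [Finset.mul_sum]
    exact Finset.sum_congr rfl fun s _ => by ring
  have hsplit : ∀ t : ℕ,
      M.γ ^ t * (expReward M πh (stateDist M πh t) + M.γ * f (t + 1) - f t)
        = M.γ ^ t * expReward M πh (stateDist M πh t) + (h (t + 1) - h t) := by
    intro t
    rw [hh]
    simp only
    ring
  rw [hRHS, tsum_congr fun t => by rw [hkey t, hsplit t]]
  rw [Summable.tsum_add hesum (hhsum'.sub hhsum), Summable.tsum_sub hhsum' hhsum]
  have htel : ∑' t : ℕ, h (t + 1) = (∑' t : ℕ, h t) - h 0 := by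
    have := Summable.tsum_eq_zero_add hhsum
    linarith
  have hf0 : h 0 = J M π := by
    rw [hh]
    simp only [pow_zero, one_mul, hf]
    rw [J_eq_sum_V M hπ]
    rfl
  rw [htel, hf0]
  rw [show (∑' b : ℕ, M.γ ^ b * expReward M πh (stateDist M πh b)) = J M πh from rfl]
  ring

end A2PO
end

section
/- MAPPO-style bound combination: suppose real numbers D, L_1, …, L_n, ε ≥ 0, α_1, …, α_n ≥ 0 satisfy |D − L_i| ≤ (2ε/(1−γ))(α_i + ∑_{j=1}^n α_j) for each i and |L_i| ≤ 2ε α_i/(1−γ). Then |D − ∑_{i=1}^n L_i| ≤ (4ε/(1−γ)) ∑_{i=1}^n α_i. -/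
/-- MAPPO-style bound combination. -/
theorem mappo_bound_combination {n : ℕ} (hn : 1 ≤ n) (γ D ε : ℝ)
    (hγ0 : 0 ≤ γ) (hγ1 : γ < 1) (hε : 0 ≤ ε)
    (L α : Fin n → ℝ) (hα : ∀ i, 0 ≤ α i)
    (h1 : ∀ i, |D - L i| ≤ (2 * ε / (1 - γ)) * (α i + ∑ j, α j))
    (h2 : ∀ i, |L i| ≤ 2 * ε * α i / (1 - γ)) :
    |D - ∑ i, L i| ≤ (4 * ε / (1 - γ)) * ∑ i, α i := by
  have hpos : (0:ℝ) < 1 - γ := by linarith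
  have hnR : (1:ℝ) ≤ (n:ℝ) := by exact_mod_cast hn
  have hnpos : (0:ℝ) < n := by linarith
  set S := ∑ i, α i with hS
  have hSnn : 0 ≤ S := Finset.sum_nonneg fun i _ => hα i
  set c := 2 * ε / (1 - γ) with hc
  have hcnn : 0 ≤ c := by positivity
  have hid : (n:ℝ) * (D - ∑ i, L i) = (∑ i, (D - L i)) - ((n:ℝ) - 1) * ∑ i, L i := by
    rw [Finset.sum_sub_distrib, Finset.sum_const, Finset.card_univ, Fintype.card_fin]
    push_cast
    ring
  have h1' : |∑ i, (D - L i)| ≤ c * (S + (n:ℝ) * S) := by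
    calc |∑ i, (D - L i)| ≤ ∑ i, |D - L i| := Finset.abs_sum_le_sum_abs _ _
      _ ≤ ∑ i, c * (α i + S) := Finset.sum_le_sum fun i _ => h1 i
      _ = c * (S + (n:ℝ) * S) := by
          rw [← Finset.mul_sum, Finset.sum_add_distrib, Finset.sum_const,
            Finset.card_univ, Fintype.card_fin, hS]
          push_cast
          ring
  have h2' : |∑ i, L i| ≤ c * S := by
    calc |∑ i, L i| ≤ ∑ i, |L i| := Finset.abs_sum_le_sum_abs _ _
      _ ≤ ∑ i, c * α i := Finset.sum_le_sum fun i _ => (h2 i).trans_eq (by rw [hc]; ring)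
      _ = c * S := by rw [← Finset.mul_sum]
  have habs : |(∑ i, (D - L i)) - ((n:ℝ) - 1) * ∑ i, L i|
      ≤ |∑ i, (D - L i)| + |((n:ℝ) - 1) * ∑ i, L i| := by
    rw [sub_eq_add_neg]
    exact (abs_add_le _ _).trans_eq (by rw [abs_neg])
  have hmul : |((n:ℝ) - 1) * ∑ i, L i| ≤ ((n:ℝ) - 1) * (c * S) := by
    rw [abs_mul, abs_of_nonneg (by linarith : (0:ℝ) ≤ (n:ℝ) - 1)]
    exact mul_le_mul_of_nonneg_left h2' (by linarith)
  have hmain : (n:ℝ) * |D - ∑ i, L i| ≤ (n:ℝ) * ((4 * ε / (1 - γ)) * S) := by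
    have e1 : (n:ℝ) * |D - ∑ i, L i| = |(n:ℝ) * (D - ∑ i, L i)| := by
      rw [abs_mul, abs_of_pos hnpos]
    rw [e1, hid]
    have hcc : (n:ℝ) * ((4 * ε / (1 - γ)) * S) = c * (S + (n:ℝ) * S) + ((n:ℝ) - 1) * (c * S) := by
      rw [hc]; ring
    rw [hcc]
    exact habs.trans (by linarith)
  exact le_of_mul_le_mul_left hmain hnpos
end
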